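/- arXiv:2005.09725 — 2 statements merged into one kernel-verified Lean document; each statement's English description precedes it below -/
import Mathlib

section
/- Rotational invariance of second-order TGV: let O be an orthogonal d×d matrix and set Ω' := O⁻¹(Ω) = { x ∈ ℝ^d : O x ∈ Ω }. For every locally integrable u : Ω → ℝ, the function u∘O : Ω' → ℝ, x ↦ u(Ox), satisfies TGV²_α(u∘O) (computed on the domain Ω') = TGV²_α(u) (computed on the domain Ω). -/
open MeasureTheory Filter Topology
open scoped ENNReal

noncomputable section

/-- Partial derivative `∂f/∂x_j` of a scalar function on `ℝ^d`. -/
def pd {d : ℕ} (j : Fin d) (f : (Fin d → ℝ) → ℝ) (x : Fin d → ℝ) : ℝ :=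
  fderiv ℝ f x (Pi.single j 1)

/-- Divergence of a matrix field: `(div v)_i = ∑_j ∂v_ij/∂x_j`. -/
def mdiv {d : ℕ} (v : (Fin d → ℝ) → Fin d → Fin d → ℝ) (x : Fin d → ℝ) (i : Fin d) : ℝ :=
  ∑ j, pd j (fun y => v y i j) x

/-- Second divergence `div² v = ∑_{i,j} ∂²v_ij/∂x_i∂x_j`. -/
def mdiv2 {d : ℕ} (v : (Fin d → ℝ) → Fin d → Fin d → ℝ) (x : Fin d → ℝ) : ℝ :=
  ∑ i, ∑ j, pd i (pd j (fun y => v y i j)) x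

/-- Euclidean norm of a vector in `ℝ^d`. -/
def enorm2 {d : ℕ} (w : Fin d → ℝ) : ℝ := Real.sqrt (∑ i, (w i) ^ 2)

/-- Frobenius-type norm of a symmetric matrix: `(∑_i |M_ii|² + 2 ∑_{i<j} |M_ij|²)^(1/2)`. -/
def fnorm2 {d : ℕ} (M : Fin d → Fin d → ℝ) : ℝ :=
  Real.sqrt ((∑ i, (M i i) ^ 2) + 2 * ∑ i, ∑ j, if i < j then (M i j) ^ 2 else 0)

/-- Admissible test fields for second-order TGV: `v ∈ C_c²(Ω, S^{d×d})`,
`‖v‖_∞ ≤ α₀`, `‖div v‖_∞ ≤ α₁`. -/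
def TGVtest {d : ℕ} (Ω : Set (Fin d → ℝ)) (α₀ α₁ : ℝ)
    (v : (Fin d → ℝ) → Fin d → Fin d → ℝ) : Prop :=
  ContDiff ℝ 2 v ∧ HasCompactSupport v ∧ tsupport v ⊆ Ω ∧
    (∀ x i j, v x i j = v x j i) ∧
    (∀ x ∈ Ω, fnorm2 (v x) ≤ α₀) ∧
    (∀ x ∈ Ω, enorm2 (mdiv v x) ≤ α₁)

/-- Second-order Total Generalized Variation. -/
def TGV2 {d : ℕ} (Ω : Set (Fin d → ℝ)) (α₀ α₁ : ℝ) (u : (Fin d → ℝ) → ℝ) : ℝ≥0∞ :=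
  ⨆ (v) (_ : TGVtest Ω α₀ α₁ v), ENNReal.ofReal (∫ x in Ω, u x * mdiv2 v x)

/-- Admissible test fields for the total variation: `φ ∈ C_c¹(Ω, ℝ^d)`, `‖φ‖_∞ ≤ 1`. -/
def TVtest {d : ℕ} (Ω : Set (Fin d → ℝ)) (φ : (Fin d → ℝ) → Fin d → ℝ) : Prop :=
  ContDiff ℝ 1 φ ∧ HasCompactSupport φ ∧ tsupport φ ⊆ Ω ∧ ∀ x ∈ Ω, enorm2 (φ x) ≤ 1

/-- Divergence of a vector field. -/
def vdiv {d : ℕ} (φ : (Fin d → ℝ) → Fin d → ℝ) (x : Fin d → ℝ) : ℝ :=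
  ∑ j, pd j (fun y => φ y j) x

/-- Total variation. -/
def TVar {d : ℕ} (Ω : Set (Fin d → ℝ)) (u : (Fin d → ℝ) → ℝ) : ℝ≥0∞ :=
  ⨆ (φ) (_ : TVtest Ω φ), ENNReal.ofReal (∫ x in Ω, u x * vdiv φ x)

/-- Radon norm `‖Du - w‖_M` of the distributional derivative of `u` minus `w`. -/
def MnormDuSub {d : ℕ} (Ω : Set (Fin d → ℝ)) (u : (Fin d → ℝ) → ℝ)
    (w : (Fin d → ℝ) → Fin d → ℝ) : ℝ≥0∞ :=
  ⨆ (φ) (_ : TVtest Ω φ),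
    ENNReal.ofReal (∫ x in Ω, (u x * vdiv φ x + ∑ i, w x i * φ x i))

/-- Test fields for the Radon norm of the symmetrized derivative:
`v ∈ C_c²(Ω, S^{d×d})` with `‖v‖_∞ ≤ 1`. -/
def Etest {d : ℕ} (Ω : Set (Fin d → ℝ)) (v : (Fin d → ℝ) → Fin d → Fin d → ℝ) : Prop :=
  ContDiff ℝ 2 v ∧ HasCompactSupport v ∧ tsupport v ⊆ Ω ∧
    (∀ x i j, v x i j = v x j i) ∧ (∀ x ∈ Ω, fnorm2 (v x) ≤ 1)

/-- Radon norm `‖ℰw‖_M` of the distributional symmetrized derivative of `w`. -/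
def MnormEw {d : ℕ} (Ω : Set (Fin d → ℝ)) (w : (Fin d → ℝ) → Fin d → ℝ) : ℝ≥0∞ :=
  ⨆ (v) (_ : Etest Ω v), ENNReal.ofReal (∫ x in Ω, ∑ i, w x i * mdiv v x i)



section RotationAux

variable {d : ℕ}

lemma row_orth {O : Matrix (Fin d) (Fin d) ℝ} (h : O * O.transpose = 1) (k l : Fin d) :
    ∑ i, O k i * O l i = if k = l then 1 else 0 := by
  have := congrFun (congrFun h k) l
  simpa [Matrix.mul_apply, Matrix.one_apply, Matrix.transpose_apply] using this

lemma sq_sum_rot {O : Matrix (Fin d) (Fin d) ℝ} (h : O * O.transpose = 1) (w : Fin d → ℝ) :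
    ∑ i, (∑ k, O k i * w k) ^ 2 = ∑ k, (w k) ^ 2 := by
  have h1 : ∀ i : Fin d, (∑ k, O k i * w k) ^ 2 = ∑ k, ∑ l, (O k i * O l i) * (w k * w l) := by
    intro i
    rw [sq, Finset.sum_mul_sum]
    apply Finset.sum_congr rfl; intro k _; apply Finset.sum_congr rfl; intro l _; ring
  simp_rw [h1]
  rw [Finset.sum_comm]
  have h2 : ∀ k : Fin d, ∑ i, ∑ l, (O k i * O l i) * (w k * w l)
      = ∑ l, (∑ i, O k i * O l i) * (w k * w l) := by
    intro k; rw [Finset.sum_comm]; simp [Finset.sum_mul]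
  simp_rw [h2, row_orth h]
  simp [ite_mul, Finset.sum_ite_eq', sq]

lemma fnorm2_eq {M : Fin d → Fin d → ℝ} (hM : ∀ i j, M i j = M j i) :
    fnorm2 M = Real.sqrt (∑ i, ∑ j, (M i j) ^ 2) := by
  unfold fnorm2
  congr 1
  have key : ∀ i j : Fin d, (M i j)^2 =
      (if i = j then (M i i)^2 else 0) + (if i < j then (M i j)^2 else 0)
        + (if j < i then (M i j)^2 else 0) := by
    intro i j
    rcases lt_trichotomy i j with h|h|h
    · simp [h, h.ne, not_lt.mpr h.le]
    · simp [h, lt_irrefl]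
    · simp [h, (h.ne).symm, not_lt.mpr h.le, h.ne]
  have h3 : ∑ i, ∑ j, (if j < i then (M i j)^2 else 0)
      = ∑ i, ∑ j, (if i < j then (M i j)^2 else 0) := by
    rw [Finset.sum_comm]
    apply Finset.sum_congr rfl; intro i _; apply Finset.sum_congr rfl; intro j _
    rw [hM i j]
  have expand : ∑ i, ∑ j, (M i j)^2
      = (∑ i, ∑ j, (if i = j then (M i i)^2 else 0))
        + ((∑ i, ∑ j, (if i < j then (M i j)^2 else 0))
        + (∑ i, ∑ j, (if j < i then (M i j)^2 else 0))) := by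
    rw [← Finset.sum_add_distrib]
    simp_rw [← Finset.sum_add_distrib]
    apply Finset.sum_congr rfl; intro i _; apply Finset.sum_congr rfl; intro j _
    exact (key i j).trans (by ring)
  rw [expand, h3]
  simp [Finset.sum_ite_eq']
  ring

lemma enorm2_rot {O : Matrix (Fin d) (Fin d) ℝ} (h : O * O.transpose = 1) (w : Fin d → ℝ) :
    enorm2 (fun i => ∑ k, O k i * w k) = enorm2 w := by
  unfold enorm2; rw [sq_sum_rot h]

lemma fnorm2_rot {O : Matrix (Fin d) (Fin d) ℝ} (h : O * O.transpose = 1)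
    (M : Fin d → Fin d → ℝ) (hM : ∀ i j, M i j = M j i) :
    fnorm2 (fun i j => ∑ k, ∑ l, O k i * O l j * M k l) = fnorm2 M := by
  have hsym : ∀ i j, (fun i j => ∑ k, ∑ l, O k i * O l j * M k l) i j
      = (fun i j => ∑ k, ∑ l, O k i * O l j * M k l) j i := by
    intro i j; simp only
    rw [Finset.sum_comm]
    apply Finset.sum_congr rfl; intro k _; apply Finset.sum_congr rfl; intro l _
    rw [hM l k]; ring
  rw [fnorm2_eq hsym, fnorm2_eq hM]
  congr 1
  have step1 : ∀ j, ∑ i, (∑ k, O k i * (∑ l, O l j * M k l)) ^ 2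
      = ∑ k, (∑ l, O l j * M k l) ^ 2 := fun j => sq_sum_rot h _
  have rearr : ∀ i j : Fin d, (∑ k, ∑ l, O k i * O l j * M k l)
      = ∑ k, O k i * (∑ l, O l j * M k l) := by
    intro i j; apply Finset.sum_congr rfl; intro k _
    rw [Finset.mul_sum]; apply Finset.sum_congr rfl; intro l _; ring
  simp_rw [rearr]
  rw [Finset.sum_comm]
  simp_rw [step1]
  rw [Finset.sum_comm]
  apply Finset.sum_congr rfl; intro k _
  exact sq_sum_rot h (M k)

noncomputable def OL (O : Matrix (Fin d) (Fin d) ℝ) : (Fin d → ℝ) →L[ℝ] (Fin d → ℝ) :=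
  LinearMap.toContinuousLinearMap (Matrix.mulVecLin O)

lemma OL_apply (O : Matrix (Fin d) (Fin d) ℝ) (x : Fin d → ℝ) : OL O x = O.mulVec x := rfl

lemma single_decomp (O : Matrix (Fin d) (Fin d) ℝ) (j : Fin d) :
    O.mulVec (Pi.single j 1) = ∑ m, (O m j) • Pi.single (M := fun _ => ℝ) m 1 := by
  funext i
  simp [Matrix.mulVec_single, Finset.sum_apply, Pi.single_apply]

lemma pd_comp (O : Matrix (Fin d) (Fin d) ℝ) (f : (Fin d → ℝ) → ℝ) {x : Fin d → ℝ}
    (hf : DifferentiableAt ℝ f (O.mulVec x)) (j : Fin d) :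
    pd j (fun y => f (O.mulVec y)) x = ∑ m, O m j * pd m f (O.mulVec x) := by
  have hcomp : (fun y => f (O.mulVec y)) = f ∘ (OL O) := rfl
  unfold pd
  rw [hcomp, fderiv_comp x (by rw [OL_apply]; exact hf) (OL O).differentiableAt,
    (OL O).fderiv]
  rw [ContinuousLinearMap.coe_comp', Function.comp_apply,
    show (OL O) (Pi.single j 1) = O.mulVec (Pi.single j 1) from rfl, single_decomp, map_sum]
  simp [OL_apply]

lemma pd_sum {ι : Type*} (s : Finset ι) (f : ι → (Fin d → ℝ) → ℝ) (x : Fin d → ℝ) (j : Fin d)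
    (hf : ∀ i ∈ s, DifferentiableAt ℝ (f i) x) :
    pd j (fun y => ∑ i ∈ s, f i y) x = ∑ i ∈ s, pd j (f i) x := by
  unfold pd
  rw [fderiv_fun_sum hf]
  simp

lemma pd_const_mul (c : ℝ) (f : (Fin d → ℝ) → ℝ) (x : Fin d → ℝ) (j : Fin d)
    (hf : DifferentiableAt ℝ f x) :
    pd j (fun y => c * f y) x = c * pd j f x := by
  unfold pd
  rw [fderiv_const_mul hf]
  simp

lemma contDiff_pd {f : (Fin d → ℝ) → ℝ} (hf : ContDiff ℝ 2 f) (m : Fin d) :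
    ContDiff ℝ 1 (pd m f) := by
  have h1 : ContDiff ℝ 1 (fderiv ℝ f) := hf.fderiv_right (by norm_num)
  exact h1.clm_apply contDiff_const

lemma comp_apply_contDiff {n : ℕ∞} (v : (Fin d → ℝ) → Fin d → Fin d → ℝ)
    (hv : ContDiff ℝ n v) (k l : Fin d) : ContDiff ℝ n (fun y => v y k l) :=
  (contDiff_pi.mp ((contDiff_pi.mp hv) k)) l

lemma collapse {O : Matrix (Fin d) (Fin d) ℝ} (h : O * O.transpose = 1) (k : Fin d)
    (g : Fin d → ℝ) : ∑ i, ∑ n, (O k i * O n i) * g n = g k := by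
  rw [Finset.sum_comm]
  have h2 : ∀ n, ∑ i, (O k i * O n i) * g n = (∑ i, O k i * O n i) * g n := by
    intro n; rw [Finset.sum_mul]
  simp_rw [h2, row_orth h]
  simp [ite_mul, Finset.sum_ite_eq']

lemma sum4 {O : Matrix (Fin d) (Fin d) ℝ} (h : O * O.transpose = 1) (c : Fin d → ℝ)
    (P : Fin d → Fin d → Fin d → ℝ) :
    ∑ j, ∑ k, ∑ l, c k * O l j * (∑ n, O n j * P k l n) = ∑ k, c k * ∑ l, P k l l := by
  have e : ∀ (j k l : Fin d), c k * O l j * (∑ n, O n j * P k l n)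
      = c k * ∑ n, (O l j * O n j) * P k l n := by
    intro j k l; rw [Finset.mul_sum, Finset.mul_sum]
    apply Finset.sum_congr rfl; intro n _; ring
  simp_rw [e]
  rw [Finset.sum_comm]
  apply Finset.sum_congr rfl; intro k _
  simp_rw [← Finset.mul_sum]
  congr 1
  rw [Finset.sum_comm]
  apply Finset.sum_congr rfl; intro l _
  exact collapse h l (P k l)

lemma sum3 {O : Matrix (Fin d) (Fin d) ℝ} (h : O * O.transpose = 1)
    (g : Fin d → Fin d → ℝ) :
    ∑ i, ∑ k, O k i * ∑ n, O n i * g k n = ∑ k, g k k := by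
  have e : ∀ i k : Fin d, O k i * ∑ n, O n i * g k n = ∑ n, (O k i * O n i) * g k n := by
    intro i k; rw [Finset.mul_sum]; apply Finset.sum_congr rfl; intro n _; ring
  simp_rw [e]
  rw [Finset.sum_comm]
  exact Finset.sum_congr rfl fun k _ => collapse h k (g k)

lemma pd_sum2_mul {x : Fin d → ℝ} (c : Fin d → Fin d → ℝ)
    (w : Fin d → Fin d → (Fin d → ℝ) → ℝ)
    (hw : ∀ k l, DifferentiableAt ℝ (w k l) x) (j : Fin d) :
    pd j (fun y => ∑ k, ∑ l, c k l * w k l y) x = ∑ k, ∑ l, c k l * pd j (w k l) x := by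
  rw [pd_sum Finset.univ (fun k y => ∑ l, c k l * w k l y) x j
    (fun k _ => DifferentiableAt.fun_sum (fun l _ => (hw k l).const_mul (c k l)))]
  apply Finset.sum_congr rfl; intro k _
  rw [pd_sum Finset.univ (fun l y => c k l * w k l y) x j
    (fun l _ => (hw k l).const_mul (c k l))]
  apply Finset.sum_congr rfl; intro l _
  exact pd_const_mul _ _ _ _ (hw k l)

lemma mp_mulVec {O : Matrix (Fin d) (Fin d) ℝ} (hO : O.transpose * O = 1) :
    MeasurePreserving (fun x : Fin d → ℝ => O.mulVec x) volume volume := by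
  have h2 : O.det * O.det = 1 := by
    have h := congrArg Matrix.det hO
    rwa [Matrix.det_mul, Matrix.det_transpose, Matrix.det_one] at h
  have hne : O.det ≠ 0 := by
    intro h; rw [h] at h2; norm_num at h2
  have habs : |O.det| = 1 := by
    rcases mul_self_eq_one_iff.mp h2 with h|h <;> rw [h] <;> norm_num
  constructor
  · exact (OL O).continuous.measurable
  · have hmap := Real.map_matrix_volume_pi_eq_smul_volume_pi (M := O) hne
    have hc : ⇑(Matrix.toLin' O) = fun x : Fin d → ℝ => O.mulVec x :=
      funext fun x => Matrix.toLin'_apply O x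
    rw [hc] at hmap
    rw [hmap, abs_inv, habs]
    norm_num

lemma mdiv_rot {O : Matrix (Fin d) (Fin d) ℝ} {v : (Fin d → ℝ) → Fin d → Fin d → ℝ}
    (hOO : O * O.transpose = 1) (hv : ContDiff ℝ 2 v) (x : Fin d → ℝ) (i : Fin d) :
    mdiv (fun y i j => ∑ k, ∑ l, O k i * O l j * v (O.mulVec y) k l) x i
      = ∑ k, O k i * mdiv v (O.mulVec x) k := by
  have hC2 : ∀ k l, ContDiff ℝ 2 (fun z => v z k l) := comp_apply_contDiff v hv
  have hCT : ∀ k l, ContDiff ℝ 2 (fun y => v (O.mulVec y) k l) :=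
    fun k l => (hC2 k l).comp (OL O).contDiff
  simp only [mdiv]
  have e1 : ∀ j, pd j (fun y => ∑ k, ∑ l, O k i * O l j * v (O.mulVec y) k l) x
      = ∑ k, ∑ l, O k i * O l j * (∑ n, O n j * pd n (fun z => v z k l) (O.mulVec x)) := by
    intro j
    rw [pd_sum2_mul (fun k l => O k i * O l j) (fun k l y => v (O.mulVec y) k l)
      (fun k l => ((hCT k l).differentiable two_ne_zero).differentiableAt) j]
    apply Finset.sum_congr rfl; intro k _; apply Finset.sum_congr rfl; intro l _
    congr 1
    exact pd_comp O (fun z => v z k l)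
      (((hC2 k l).differentiable two_ne_zero).differentiableAt) j
  simp_rw [e1]
  have e2 : ∀ (j k l : Fin d), O k i * O l j * (∑ n, O n j * pd n (fun z => v z k l) (O.mulVec x))
      = (fun k => O k i) k * O l j * (∑ n, O n j * (fun k l n => pd n (fun z => v z k l) (O.mulVec x)) k l n) := by
    intro j k l; rfl
  exact sum4 hOO (fun k => O k i) (fun k l n => pd n (fun z => v z k l) (O.mulVec x))

lemma mdiv_contDiff {v : (Fin d → ℝ) → Fin d → Fin d → ℝ} (hv : ContDiff ℝ 2 v) (k : Fin d) :
    ContDiff ℝ 1 (fun y => mdiv v y k) := by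
  show ContDiff ℝ 1 (fun y => ∑ j, pd j (fun z => v z k j) y)
  exact ContDiff.sum fun j _ => contDiff_pd (comp_apply_contDiff v hv k j) j

lemma mdiv2_eq {v : (Fin d → ℝ) → Fin d → Fin d → ℝ} (hv : ContDiff ℝ 2 v) (x : Fin d → ℝ) :
    mdiv2 v x = ∑ i, pd i (fun y => mdiv v y i) x := by
  simp only [mdiv2, mdiv]
  apply Finset.sum_congr rfl; intro i _
  rw [pd_sum Finset.univ (fun j y => pd j (fun z => v z i j) y) x i
    (fun j _ => ((contDiff_pd (comp_apply_contDiff v hv i j) j).differentiable one_ne_zero).differentiableAt)]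

lemma contDiff_rot {O : Matrix (Fin d) (Fin d) ℝ} {v : (Fin d → ℝ) → Fin d → Fin d → ℝ}
    (hv : ContDiff ℝ 2 v) :
    ContDiff ℝ 2 (fun y i j => ∑ k, ∑ l, O k i * O l j * v (O.mulVec y) k l) := by
  apply contDiff_pi.mpr; intro i; apply contDiff_pi.mpr; intro j
  apply ContDiff.sum; intro k _; apply ContDiff.sum; intro l _
  exact contDiff_const.mul ((comp_apply_contDiff v hv k l).comp (OL O).contDiff)

lemma mdiv2_rot {O : Matrix (Fin d) (Fin d) ℝ} {v : (Fin d → ℝ) → Fin d → Fin d → ℝ}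
    (hO : O.transpose * O = 1) (hv : ContDiff ℝ 2 v) (x : Fin d → ℝ) :
    mdiv2 (fun y i j => ∑ k, ∑ l, O k i * O l j * v (O.mulVec y) k l) x
      = mdiv2 v (O.mulVec x) := by
  have hOO : O * O.transpose = 1 := mul_eq_one_comm.mp hO
  have hv' : ContDiff ℝ 2 (fun y i j => ∑ k, ∑ l, O k i * O l j * v (O.mulVec y) k l) :=
    contDiff_rot hv
  rw [mdiv2_eq hv' x, mdiv2_eq hv (O.mulVec x)]
  have e1 : ∀ i, pd i (fun y => mdiv (fun y i j => ∑ k, ∑ l, O k i * O l j * v (O.mulVec y) k l) y i) x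
      = ∑ k, O k i * ∑ n, O n i * pd n (fun y => mdiv v y k) (O.mulVec x) := by
    intro i
    have hfun : (fun y => mdiv (fun y i j => ∑ k, ∑ l, O k i * O l j * v (O.mulVec y) k l) y i)
        = fun y => ∑ k, O k i * mdiv v (O.mulVec y) k :=
      funext fun y => mdiv_rot hOO hv y i
    rw [hfun]
    have hd : ∀ k : Fin d, DifferentiableAt ℝ (fun y => mdiv v (O.mulVec y) k) x :=
      fun k => (((mdiv_contDiff hv k).comp (OL O).contDiff).differentiable one_ne_zero).differentiableAt
    rw [pd_sum Finset.univ (fun k y => O k i * mdiv v (O.mulVec y) k) x i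
      (fun k _ => (hd k).const_mul _)]
    apply Finset.sum_congr rfl; intro k _
    rw [pd_const_mul (O k i) (fun y => mdiv v (O.mulVec y) k) x i (hd k)]
    congr 1
    exact pd_comp O (fun z => mdiv v z k)
      (((mdiv_contDiff hv k).differentiable one_ne_zero).differentiableAt) i
  simp_rw [e1]
  exact sum3 hOO (fun k n => pd n (fun y => mdiv v y k) (O.mulVec x))

lemma TGV2_le_rot (Ω : Set (Fin d → ℝ)) (α₀ α₁ : ℝ) (u : (Fin d → ℝ) → ℝ)
    (O : Matrix (Fin d) (Fin d) ℝ) (hO : O.transpose * O = 1) :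
    TGV2 Ω α₀ α₁ u ≤ TGV2 {x : Fin d → ℝ | O.mulVec x ∈ Ω} α₀ α₁ (fun x => u (O.mulVec x)) := by
  have hOO : O * O.transpose = 1 := mul_eq_one_comm.mp hO
  refine iSup₂_le fun v hv => ?_
  obtain ⟨hsm, hcs, hts, hsym, hfb, heb⟩ := hv
  set v' : (Fin d → ℝ) → Fin d → Fin d → ℝ :=
    fun y i j => ∑ k, ∑ l, O k i * O l j * v (O.mulVec y) k l with hv'def
  have hv'sm : ContDiff ℝ 2 v' := contDiff_rot hsm
  have hsupp : Function.support v' ⊆ (fun x => O.mulVec x) ⁻¹' (tsupport v) := by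
    intro x hx
    by_contra hmem
    apply hx
    have hz : v (O.mulVec x) = 0 := image_eq_zero_of_notMem_tsupport hmem
    simp only [hv'def]
    funext i j
    simp [hz]
  have hts' : tsupport v' ⊆ (fun x => O.mulVec x) ⁻¹' (tsupport v) :=
    closure_minimal hsupp ((isClosed_tsupport v).preimage (OL O).continuous)
  have hK : IsCompact ((fun x => O.mulVec x) ⁻¹' (tsupport v)) := by
    have himg : (fun x => O.mulVec x) ⁻¹' (tsupport v)
        = (fun x => O.transpose.mulVec x) '' (tsupport v) := by
      ext x
      constructor
      · intro hx
        refine ⟨O.mulVec x, hx, ?_⟩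
        show O.transpose.mulVec (O.mulVec x) = x
        rw [Matrix.mulVec_mulVec, hO, Matrix.one_mulVec]
      · rintro ⟨y, hy, rfl⟩
        show O.mulVec (O.transpose.mulVec y) ∈ tsupport v
        rw [Matrix.mulVec_mulVec, hOO, Matrix.one_mulVec]
        exact hy
    rw [himg]
    exact hcs.image (OL O.transpose).continuous
  have hcs' : HasCompactSupport v' := hK.of_isClosed_subset (isClosed_tsupport v') hts'
  have hts'' : tsupport v' ⊆ {x : Fin d → ℝ | O.mulVec x ∈ Ω} :=
    hts'.trans (Set.preimage_mono hts)
  have hsym' : ∀ x i j, v' x i j = v' x j i := by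
    intro x i j
    simp only [hv'def]
    rw [Finset.sum_comm]
    apply Finset.sum_congr rfl; intro k _; apply Finset.sum_congr rfl; intro l _
    rw [hsym (O.mulVec x) l k]; ring
  have hfb' : ∀ x ∈ {x : Fin d → ℝ | O.mulVec x ∈ Ω}, fnorm2 (v' x) ≤ α₀ := by
    intro x hx
    have heq : fnorm2 (v' x) = fnorm2 (v (O.mulVec x)) := by
      simp only [hv'def]
      exact fnorm2_rot hOO (v (O.mulVec x)) (fun i j => hsym (O.mulVec x) i j)
    rw [heq]
    exact hfb _ hx
  have heb' : ∀ x ∈ {x : Fin d → ℝ | O.mulVec x ∈ Ω}, enorm2 (mdiv v' x) ≤ α₁ := by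
    intro x hx
    have heq : mdiv v' x = fun i => ∑ k, O k i * mdiv v (O.mulVec x) k := by
      funext i
      simp only [hv'def]
      exact mdiv_rot hOO hsm x i
    rw [heq, enorm2_rot hOO (mdiv v (O.mulVec x))]
    exact heb _ hx
  have hTest : TGVtest {x : Fin d → ℝ | O.mulVec x ∈ Ω} α₀ α₁ v' :=
    ⟨hv'sm, hcs', hts'', hsym', hfb', heb'⟩
  refine le_iSup₂_of_le v' hTest (le_of_eq ?_)
  congr 1
  -- change of variables
  let He : (Fin d → ℝ) ≃ₜ (Fin d → ℝ) :=
    { toFun := fun x => O.mulVec x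
      invFun := fun x => O.transpose.mulVec x
      left_inv := fun x => by
        show O.transpose.mulVec (O.mulVec x) = x
        rw [Matrix.mulVec_mulVec, hO, Matrix.one_mulVec]
      right_inv := fun x => by
        show O.mulVec (O.transpose.mulVec x) = x
        rw [Matrix.mulVec_mulVec, hOO, Matrix.one_mulVec]
      continuous_toFun := (OL O).continuous
      continuous_invFun := (OL O.transpose).continuous }
  have hemb : MeasurableEmbedding (fun x : Fin d → ℝ => O.mulVec x) := He.measurableEmbedding
  have hchg : ∫ x in (fun x : Fin d → ℝ => O.mulVec x) ⁻¹' Ω,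
      (fun y => u y * mdiv2 v y) (O.mulVec x)
      = ∫ y in Ω, u y * mdiv2 v y :=
    (mp_mulVec hO).setIntegral_preimage_emb hemb (fun y => u y * mdiv2 v y) Ω
  have hset : {x : Fin d → ℝ | O.mulVec x ∈ Ω} = (fun x : Fin d → ℝ => O.mulVec x) ⁻¹' Ω := rfl
  calc ∫ x in Ω, u x * mdiv2 v x
      = ∫ x in (fun x : Fin d → ℝ => O.mulVec x) ⁻¹' Ω,
          (fun y => u y * mdiv2 v y) (O.mulVec x) := hchg.symm
    _ = ∫ x in {x : Fin d → ℝ | O.mulVec x ∈ Ω}, (fun x => u (O.mulVec x)) x * mdiv2 v' x := by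
        rw [hset]
        apply integral_congr_ae
        filter_upwards with x
        show u (O.mulVec x) * mdiv2 v (O.mulVec x) = u (O.mulVec x) * mdiv2 v' x
        rw [hv'def, mdiv2_rot hO hsm x]

end RotationAux

/-- Rotational invariance of second-order TGV. -/
theorem tgv2_rotation_invariant {d : ℕ} (hd : 1 ≤ d) (Ω : Set (Fin d → ℝ))
    (hΩo : IsOpen Ω) (hΩb : Bornology.IsBounded Ω)
    (α₀ α₁ : ℝ) (hα₀ : 0 < α₀) (hα₁ : 0 < α₁)
    (u : (Fin d → ℝ) → ℝ) (hu : LocallyIntegrableOn u Ω)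
    (O : Matrix (Fin d) (Fin d) ℝ) (hO : O.transpose * O = 1) :
    TGV2 {x : Fin d → ℝ | O.mulVec x ∈ Ω} α₀ α₁ (fun x => u (O.mulVec x))
      = TGV2 Ω α₀ α₁ u := by
  have hOO : O * O.transpose = 1 := mul_eq_one_comm.mp hO
  have hO' : O.transpose.transpose * O.transpose = 1 := by
    rw [Matrix.transpose_transpose]; exact hOO
  apply le_antisymm
  · have h := TGV2_le_rot {x : Fin d → ℝ | O.mulVec x ∈ Ω} α₀ α₁
      (fun x => u (O.mulVec x)) O.transpose hO'
    have hset : {x : Fin d → ℝ | O.transpose.mulVec x ∈ {x : Fin d → ℝ | O.mulVec x ∈ Ω}} = Ω := by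
      ext x
      simp only [Set.mem_setOf_eq, Matrix.mulVec_mulVec, hOO, Matrix.one_mulVec]
    have hfun : (fun x => u (O.mulVec (O.transpose.mulVec x))) = u := by
      funext x
      rw [Matrix.mulVec_mulVec, hOO, Matrix.one_mulVec]
    rw [hset, hfun] at h
    exact h
  · exact TGV2_le_rot Ω α₀ α₁ u O hO


end
end

section
/- Weak lower semicontinuity of second-order TGV on Lᵖ: let 1 < p < ∞ and let p' be the conjugate exponent. If (uₙ) is a sequence in Lᵖ(Ω) converging weakly to u ∈ Lᵖ(Ω), i.e., ∫_Ω uₙ g dx → ∫_Ω u g dx for every g ∈ L^{p'}(Ω), then TGV²_α(u) ≤ liminf_{n→∞} TGV²_α(uₙ) (liminf taken in [0,∞]). -/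
open MeasureTheory Filter Topology
open scoped ENNReal

noncomputable section

lemma pd_contDiff' {d n : ℕ} (j : Fin d) {f : (Fin d → ℝ) → ℝ}
    (hf : ContDiff ℝ (n + 1) f) : ContDiff ℝ n (pd j f) := by
  have h : ContDiff ℝ n (fderiv ℝ f) := hf.fderiv_right (by exact_mod_cast le_rfl)
  exact h.clm_apply contDiff_const

lemma pd_zero_outside {d : ℕ} (j : Fin d) (f : (Fin d → ℝ) → ℝ) {x : Fin d → ℝ}
    (hx : x ∉ tsupport f) : pd j f x = 0 := by
  have h : f =ᶠ[𝓝 x] 0 := by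
    filter_upwards [(isOpen_compl_iff.mpr (isClosed_tsupport f)).mem_nhds hx] with y hy
    exact image_eq_zero_of_notMem_tsupport hy
  rw [pd, h.fderiv_eq]
  rw [show (0 : (Fin d → ℝ) → ℝ) = (fun _ => 0) from rfl, fderiv_fun_const]
  simp

lemma tsupport_pd_subset {d : ℕ} (j : Fin d) (f : (Fin d → ℝ) → ℝ) :
    tsupport (pd j f) ⊆ tsupport f := by
  apply closure_minimal _ (isClosed_tsupport f)
  intro x hx
  by_contra hc
  exact hx (pd_zero_outside j f hc)

lemma mdiv2_continuous {d : ℕ} {v : (Fin d → ℝ) → Fin d → Fin d → ℝ}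
    (hv : ContDiff ℝ 2 v) : Continuous (mdiv2 v) := by
  apply continuous_finset_sum
  intro i _
  apply continuous_finset_sum
  intro j _
  have h2 : ContDiff ℝ 2 (fun y => v y i j) :=
    contDiff_pi.mp (contDiff_pi.mp hv i) j
  have h1 : ContDiff ℝ 1 (pd j (fun y => v y i j)) := pd_contDiff' j (by exact_mod_cast h2)
  have h0 : ContDiff ℝ 0 (pd i (pd j (fun y => v y i j))) := pd_contDiff' i (by exact_mod_cast h1)
  exact h0.continuous

lemma mdiv2_support {d : ℕ} (v : (Fin d → ℝ) → Fin d → Fin d → ℝ) {x : Fin d → ℝ}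
    (hx : x ∉ tsupport v) : mdiv2 v x = 0 := by
  apply Finset.sum_eq_zero; intro i _
  apply Finset.sum_eq_zero; intro j _
  apply pd_zero_outside
  intro hmem
  have h1 : tsupport (pd j (fun y => v y i j)) ⊆ tsupport v := by
    refine (tsupport_pd_subset j _).trans ?_
    apply closure_mono
    intro y hy hzero
    exact hy (by simp [hzero])
  exact hx (h1 hmem)

/-- Weak lower semicontinuity of second-order TGV on `Lᵖ(Ω)`, `1 < p < ∞`. -/
theorem tgv2_weak_lsc_Lp {d : ℕ} (hd : 1 ≤ d) (Ω : Set (Fin d → ℝ))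
    (hΩo : IsOpen Ω) (hΩb : Bornology.IsBounded Ω)
    (α₀ α₁ : ℝ) (hα₀ : 0 < α₀) (hα₁ : 0 < α₁)
    (p q : ℝ) (hpq : Real.HolderConjugate p q)
    (u : ℕ → (Fin d → ℝ) → ℝ) (u₀ : (Fin d → ℝ) → ℝ)
    (hu : ∀ n, MemLp (u n) (ENNReal.ofReal p) (volume.restrict Ω))
    (hu₀ : MemLp u₀ (ENNReal.ofReal p) (volume.restrict Ω))
    (hweak : ∀ g : (Fin d → ℝ) → ℝ, MemLp g (ENNReal.ofReal q) (volume.restrict Ω) →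
      Tendsto (fun n => ∫ x in Ω, u n x * g x) atTop (𝓝 (∫ x in Ω, u₀ x * g x))) :
    TGV2 Ω α₀ α₁ u₀ ≤ Filter.liminf (fun n => TGV2 Ω α₀ α₁ (u n)) atTop := by
  refine iSup₂_le fun v hv => ?_
  have hv2 := hv.1
  have hvcs := hv.2.1
  have hcont : Continuous (mdiv2 v) := mdiv2_continuous hv2
  have hcs : HasCompactSupport (mdiv2 v) := by
    apply HasCompactSupport.intro hvcs
    intro x hx
    exact mdiv2_support v hx
  have hg : MemLp (mdiv2 v) (ENNReal.ofReal q) (volume.restrict Ω) :=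
    hcont.memLp_of_hasCompactSupport hcs
  have hlim := hweak _ hg
  have h1 : ∀ n, ENNReal.ofReal (∫ x in Ω, u n x * mdiv2 v x) ≤ TGV2 Ω α₀ α₁ (u n) := by
    intro n
    exact le_iSup₂ (f := fun v (_ : TGVtest Ω α₀ α₁ v) =>
      ENNReal.ofReal (∫ x in Ω, u n x * mdiv2 v x)) v hv
  calc ENNReal.ofReal (∫ x in Ω, u₀ x * mdiv2 v x)
      = Filter.liminf (fun n => ENNReal.ofReal (∫ x in Ω, u n x * mdiv2 v x)) atTop :=
        ((ENNReal.continuous_ofReal.continuousAt.tendsto.comp hlim).liminf_eq).symm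
    _ ≤ Filter.liminf (fun n => TGV2 Ω α₀ α₁ (u n)) atTop :=
        liminf_le_liminf (Filter.Eventually.of_forall h1)

end
end
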